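/- Let A be a 3×3 real sign pattern. If D2(M) ≥ 0 for every M ∈ Q_A, then either D2(M) > 0 for every M ∈ Q_A or D2(M) = 0 for every M ∈ Q_A. Likewise, if D2(M) ≤ 0 for every M ∈ Q_A, then either D2(M) < 0 for every M ∈ Q_A or D2(M) = 0 for every M ∈ Q_A. In other words, for a 3-pattern, D2 on the qualitative class is either identically positive, identically negative, identically zero, or takes both signs. -/

import Mathlib

/-- The `k`-th minor-sum of a `3 × 3` real matrix `M`: the sum of its `k × k`
principal minors, i.e. `(-1)^k` times the coefficient of `X^(3-k)` in the
characteristic polynomial. -/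
noncomputable def J3 (M : Matrix (Fin 3) (Fin 3) ℝ) (k : ℕ) : ℝ :=
  (-1) ^ k * (Matrix.charpoly M).coeff (3 - k)

/-- The determinant of the second additive compound of a `3 × 3` real matrix. -/
noncomputable def D2 (M : Matrix (Fin 3) (Fin 3) ℝ) : ℝ :=
  J3 M 1 * J3 M 2 - J3 M 3

/-- The qualitative class of a sign pattern `A`. -/
def qualClass (A : Matrix (Fin 3) (Fin 3) ℝ) : Set (Matrix (Fin 3) (Fin 3) ℝ) :=
  {M | ∀ i j, Real.sign (M i j) = Real.sign (A i j)}

set_option linter.unreachableTactic false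
set_option linter.unusedTactic false

open Polynomial Matrix

lemma charpoly3 (M : Matrix (Fin 3) (Fin 3) ℝ) :
    M.charpoly = X^3 - C (M 0 0 + M 1 1 + M 2 2) * X^2
      + C (M 0 0 * M 1 1 - M 0 1 * M 1 0 + M 0 0 * M 2 2 - M 0 2 * M 2 0 + M 1 1 * M 2 2 - M 1 2 * M 2 1) * X
      - C (M.det) := by
  rw [Matrix.charpoly, Matrix.det_fin_three, Matrix.det_fin_three]
  simp [charmatrix_apply_eq, charmatrix_apply_ne]
  ring

lemma cp2 (M : Matrix (Fin 3) (Fin 3) ℝ) : (M.charpoly).coeff 2 = -(M 0 0 + M 1 1 + M 2 2) := by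
  rw [charpoly3]; simp [add_mul, coeff_X, coeff_one]

lemma cp1 (M : Matrix (Fin 3) (Fin 3) ℝ) : (M.charpoly).coeff 1 = M 0 0 * M 1 1 - M 0 1 * M 1 0 + M 0 0 * M 2 2 - M 0 2 * M 2 0 + M 1 1 * M 2 2 - M 1 2 * M 2 1 := by
  rw [charpoly3]; simp [add_mul, coeff_X, coeff_one]

lemma cp0 (M : Matrix (Fin 3) (Fin 3) ℝ) : (M.charpoly).coeff 0 = -M.det := by
  rw [charpoly3]; simp [add_mul, coeff_X, coeff_one]

lemma D2_eq (M : Matrix (Fin 3) (Fin 3) ℝ) :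
    D2 M = (M 0 0 + M 1 1) * (M 0 0 + M 2 2) * (M 1 1 + M 2 2)
      - (M 0 0 + M 1 1) * (M 0 1 * M 1 0)
      - (M 0 0 + M 2 2) * (M 0 2 * M 2 0)
      - (M 1 1 + M 2 2) * (M 1 2 * M 2 1)
      - M 0 1 * M 1 2 * M 2 0 - M 0 2 * M 1 0 * M 2 1 := by
  have : (3:ℕ) - 1 = 2 := rfl
  simp only [D2, J3, this, show (3:ℕ)-2 = 1 from rfl, show (3:ℕ)-3 = 0 from rfl,
    cp2, cp1, cp0, Matrix.det_fin_three]
  ring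

lemma sign_pos_mul {r : ℝ} (hr : 0 < r) (x : ℝ) : Real.sign (r * x) = Real.sign x := by
  rcases lt_trichotomy x 0 with h | h | h
  · rw [Real.sign_of_neg h, Real.sign_of_neg (mul_neg_of_pos_of_neg hr h)]
  · rw [h, mul_zero]
  · rw [Real.sign_of_pos h, Real.sign_of_pos (mul_pos hr h)]

lemma mem_scale {A M : Matrix (Fin 3) (Fin 3) ℝ} (hM : M ∈ qualClass A)
    (sc : Fin 3 → Fin 3 → ℝ) (hsc : ∀ i j, 0 < sc i j) :
    (Matrix.of fun i j => sc i j * M i j) ∈ qualClass A := by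
  intro i j
  rw [Matrix.of_apply, sign_pos_mul (hsc i j)]
  exact hM i j

lemma key {c : ℝ} (K B : ℝ) (e : ℝ → ℝ) (hb : ∀ l, 1 ≤ l → |e l| ≤ B)
    (h : ∀ l, 1 ≤ l → 0 ≤ K - l * c + e l) : c ≤ 0 := by
  by_contra hc
  push_neg at hc
  set l := max 1 ((K + B + 1) / c) with hl
  have h1 : 1 ≤ l := le_max_left _ _
  have h2 : K + B + 1 ≤ l * c := by
    have := le_max_right 1 ((K + B + 1) / c)
    calc K + B + 1 = (K + B + 1) / c * c := by field_simp
    _ ≤ l * c := by apply mul_le_mul_of_nonneg_right this hc.le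
  have h3 := h l h1
  have h4 := (abs_le.mp (hb l h1)).2
  linarith

lemma bnd (x l : ℝ) (hl : 1 ≤ l) : |x * l⁻¹| ≤ |x| := by
  rw [abs_mul, abs_inv]
  rcases eq_or_ne x 0 with h | h
  · simp [h]
  · have : |l| ≥ 1 := le_trans hl (le_abs_self l)
    calc |x| * |l|⁻¹ ≤ |x| * 1 := by
          apply mul_le_mul_of_nonneg_left _ (abs_nonneg x)
          exact inv_le_one_of_one_le₀ this
    _ = |x| := mul_one _



lemma ineq_pu {A : Matrix (Fin 3) (Fin 3) ℝ} (hyp : ∀ M ∈ qualClass A, 0 ≤ D2 M)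
    {M : Matrix (Fin 3) (Fin 3) ℝ} (hM : M ∈ qualClass A) :
    (M 0 0 + M 1 1) * (M 0 1 * M 1 0) ≤ 0 := by
  apply key ((M 0 0 + M 1 1)*(M 0 0 + M 2 2)*(M 1 1 + M 2 2)
      - (M 0 0 + M 2 2)*(M 0 2 * M 2 0) - M 0 1 * M 1 2 * M 2 0 - M 0 2 * M 1 0 * M 2 1)
    |(M 1 1 + M 2 2) * (M 1 2 * M 2 1)|
    (fun l => -((M 1 1 + M 2 2) * (M 1 2 * M 2 1)) * l⁻¹)
  · intro l hl
    simpa [abs_neg] using bnd (-((M 1 1 + M 2 2) * (M 1 2 * M 2 1))) l hl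
  · intro l hl
    have h0 : 0 < l := lt_of_lt_of_le one_pos hl
    have hmem := mem_scale hM (![![1, l, 1], ![1, 1, l⁻¹], ![1, 1, 1]]) (by
      intro i j
      fin_cases i <;> fin_cases j <;>
        simp [Matrix.vecHead, Matrix.vecTail] <;>
        first | exact h0 | exact inv_pos.mpr h0)
    have hD := hyp _ hmem
    rw [D2_eq] at hD
    simp only [Matrix.of_apply, Matrix.cons_val_zero, Matrix.cons_val_one, Matrix.head_cons,
      Matrix.cons_val_two, Matrix.tail_cons, Matrix.head_fin_const] at hD
    convert hD using 1
    field_simp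
    ring

lemma ineq_qv {A : Matrix (Fin 3) (Fin 3) ℝ} (hyp : ∀ M ∈ qualClass A, 0 ≤ D2 M)
    {M : Matrix (Fin 3) (Fin 3) ℝ} (hM : M ∈ qualClass A) :
    (M 0 0 + M 2 2) * (M 0 2 * M 2 0) ≤ 0 := by
  apply key ((M 0 0 + M 1 1)*(M 0 0 + M 2 2)*(M 1 1 + M 2 2)
      - (M 1 1 + M 2 2)*(M 1 2 * M 2 1) - M 0 1 * M 1 2 * M 2 0 - M 0 2 * M 1 0 * M 2 1)
    |(M 0 0 + M 1 1) * (M 0 1 * M 1 0)|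
    (fun l => -((M 0 0 + M 1 1) * (M 0 1 * M 1 0)) * l⁻¹)
  · intro l hl
    simpa [abs_neg] using bnd (-((M 0 0 + M 1 1) * (M 0 1 * M 1 0))) l hl
  · intro l hl
    have h0 : 0 < l := lt_of_lt_of_le one_pos hl
    have hmem := mem_scale hM (![![1, 1, l], ![l⁻¹, 1, 1], ![1, 1, 1]]) (by
      intro i j
      fin_cases i <;> fin_cases j <;>
        simp [Matrix.vecHead, Matrix.vecTail] <;>
        first | exact h0 | exact inv_pos.mpr h0)
    have hD := hyp _ hmem
    rw [D2_eq] at hD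
    simp only [Matrix.of_apply, Matrix.cons_val_zero, Matrix.cons_val_one, Matrix.head_cons,
      Matrix.cons_val_two, Matrix.tail_cons, Matrix.head_fin_const] at hD
    convert hD using 1
    field_simp
    ring

lemma ineq_rw {A : Matrix (Fin 3) (Fin 3) ℝ} (hyp : ∀ M ∈ qualClass A, 0 ≤ D2 M)
    {M : Matrix (Fin 3) (Fin 3) ℝ} (hM : M ∈ qualClass A) :
    (M 1 1 + M 2 2) * (M 1 2 * M 2 1) ≤ 0 := by
  apply key ((M 0 0 + M 1 1)*(M 0 0 + M 2 2)*(M 1 1 + M 2 2)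
      - (M 0 0 + M 1 1)*(M 0 1 * M 1 0) - M 0 1 * M 1 2 * M 2 0 - M 0 2 * M 1 0 * M 2 1)
    |(M 0 0 + M 2 2) * (M 0 2 * M 2 0)|
    (fun l => -((M 0 0 + M 2 2) * (M 0 2 * M 2 0)) * l⁻¹)
  · intro l hl
    simpa [abs_neg] using bnd (-((M 0 0 + M 2 2) * (M 0 2 * M 2 0))) l hl
  · intro l hl
    have h0 : 0 < l := lt_of_lt_of_le one_pos hl
    have hmem := mem_scale hM (![![1, 1, 1], ![1, 1, l], ![l⁻¹, 1, 1]]) (by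
      intro i j
      fin_cases i <;> fin_cases j <;>
        simp [Matrix.vecHead, Matrix.vecTail] <;>
        first | exact h0 | exact inv_pos.mpr h0)
    have hD := hyp _ hmem
    rw [D2_eq] at hD
    simp only [Matrix.of_apply, Matrix.cons_val_zero, Matrix.cons_val_one, Matrix.head_cons,
      Matrix.cons_val_two, Matrix.tail_cons, Matrix.head_fin_const] at hD
    convert hD using 1
    field_simp
    ring

lemma ineq_s {A : Matrix (Fin 3) (Fin 3) ℝ} (hyp : ∀ M ∈ qualClass A, 0 ≤ D2 M)
    {M : Matrix (Fin 3) (Fin 3) ℝ} (hM : M ∈ qualClass A) :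
    M 0 1 * M 1 2 * M 2 0 ≤ 0 := by
  apply key ((M 0 0 + M 1 1)*(M 0 0 + M 2 2)*(M 1 1 + M 2 2)
      - (M 0 0 + M 1 1)*(M 0 1 * M 1 0) - (M 0 0 + M 2 2)*(M 0 2 * M 2 0)
      - (M 1 1 + M 2 2)*(M 1 2 * M 2 1))
    |M 0 2 * M 1 0 * M 2 1|
    (fun l => -(M 0 2 * M 1 0 * M 2 1) * l⁻¹)
  · intro l hl
    simpa [abs_neg] using bnd (-(M 0 2 * M 1 0 * M 2 1)) l hl
  · intro l hl
    have h0 : 0 < l := lt_of_lt_of_le one_pos hl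
    have hmem := mem_scale hM (![![1, l, 1], ![l⁻¹, 1, 1], ![1, 1, 1]]) (by
      intro i j
      fin_cases i <;> fin_cases j <;>
        simp [Matrix.vecHead, Matrix.vecTail] <;>
        first | exact h0 | exact inv_pos.mpr h0)
    have hD := hyp _ hmem
    rw [D2_eq] at hD
    simp only [Matrix.of_apply, Matrix.cons_val_zero, Matrix.cons_val_one, Matrix.head_cons,
      Matrix.cons_val_two, Matrix.tail_cons, Matrix.head_fin_const] at hD
    convert hD using 1
    field_simp
    ring

lemma ineq_t {A : Matrix (Fin 3) (Fin 3) ℝ} (hyp : ∀ M ∈ qualClass A, 0 ≤ D2 M)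
    {M : Matrix (Fin 3) (Fin 3) ℝ} (hM : M ∈ qualClass A) :
    M 0 2 * M 1 0 * M 2 1 ≤ 0 := by
  apply key ((M 0 0 + M 1 1)*(M 0 0 + M 2 2)*(M 1 1 + M 2 2)
      - (M 0 0 + M 1 1)*(M 0 1 * M 1 0) - (M 0 0 + M 2 2)*(M 0 2 * M 2 0)
      - (M 1 1 + M 2 2)*(M 1 2 * M 2 1))
    |M 0 1 * M 1 2 * M 2 0|
    (fun l => -(M 0 1 * M 1 2 * M 2 0) * l⁻¹)
  · intro l hl
    simpa [abs_neg] using bnd (-(M 0 1 * M 1 2 * M 2 0)) l hl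
  · intro l hl
    have h0 : 0 < l := lt_of_lt_of_le one_pos hl
    have hmem := mem_scale hM (![![1, l⁻¹, 1], ![l, 1, 1], ![1, 1, 1]]) (by
      intro i j
      fin_cases i <;> fin_cases j <;>
        simp [Matrix.vecHead, Matrix.vecTail] <;>
        first | exact h0 | exact inv_pos.mpr h0)
    have hD := hyp _ hmem
    rw [D2_eq] at hD
    simp only [Matrix.of_apply, Matrix.cons_val_zero, Matrix.cons_val_one, Matrix.head_cons,
      Matrix.cons_val_two, Matrix.tail_cons, Matrix.head_fin_const] at hD
    convert hD using 1
    field_simp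
    ring

lemma ineq_pqr {A : Matrix (Fin 3) (Fin 3) ℝ} (hyp : ∀ M ∈ qualClass A, 0 ≤ D2 M)
    {M : Matrix (Fin 3) (Fin 3) ℝ} (hM : M ∈ qualClass A) :
    0 ≤ (M 0 0 + M 1 1) * (M 0 0 + M 2 2) * (M 1 1 + M 2 2) := by
  have h := key (c := -((M 0 0 + M 1 1) * (M 0 0 + M 2 2) * (M 1 1 + M 2 2))) 0
    (|(M 0 0 + M 1 1)*(M 0 1 * M 1 0) + (M 0 0 + M 2 2)*(M 0 2 * M 2 0)
        + (M 1 1 + M 2 2)*(M 1 2 * M 2 1)|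
      + |M 0 1 * M 1 2 * M 2 0 + M 0 2 * M 1 0 * M 2 1|)
    (fun l => -((M 0 0 + M 1 1)*(M 0 1 * M 1 0) + (M 0 0 + M 2 2)*(M 0 2 * M 2 0)
        + (M 1 1 + M 2 2)*(M 1 2 * M 2 1)) * l⁻¹
      + -(M 0 1 * M 1 2 * M 2 0 + M 0 2 * M 1 0 * M 2 1) * l⁻¹ * l⁻¹)
    ?_ ?_
  · linarith
  · intro l hl
    refine le_trans (abs_add_le _ _) (add_le_add ?_ ?_)
    · exact le_trans (bnd _ l hl) (le_of_eq (abs_neg _))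
    · exact le_trans (bnd _ l hl) (le_trans (bnd _ l hl) (le_of_eq (abs_neg _)))
  · intro l hl
    have h0 : 0 < l := lt_of_lt_of_le one_pos hl
    have hmem := mem_scale hM (![![1, l⁻¹, l⁻¹], ![l⁻¹, 1, l⁻¹], ![l⁻¹, l⁻¹, 1]]) (by
      intro i j
      fin_cases i <;> fin_cases j <;>
        simp [Matrix.vecHead, Matrix.vecTail] <;>
        first | exact h0 | exact inv_pos.mpr h0)
    have hD := hyp _ hmem
    rw [D2_eq] at hD
    simp only [Matrix.of_apply, Matrix.cons_val_zero, Matrix.cons_val_one, Matrix.head_cons,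
      Matrix.cons_val_two, Matrix.tail_cons, Matrix.head_fin_const] at hD
    have hD2 := mul_nonneg h0.le hD
    convert hD2 using 1
    · exact rfl
    field_simp
    ring



lemma sgnP {x y : ℝ} (hx : 0 < x) (hy : 0 < y) : Real.sign x = Real.sign y := by
  rw [Real.sign_of_pos hx, Real.sign_of_pos hy]

lemma sgnN {x y : ℝ} (hx : x < 0) (hy : y < 0) : Real.sign x = Real.sign y := by
  rw [Real.sign_of_neg hx, Real.sign_of_neg hy]

lemma core3 (a0 e0 i0 : ℝ)
    (H : ∀ a e i : ℝ, Real.sign a = Real.sign a0 → Real.sign e = Real.sign e0 →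
      Real.sign i = Real.sign i0 → 0 ≤ (a + e) * (a + i) * (e + i))
    (hz : (a0 + e0) * (a0 + i0) * (e0 + i0) = 0)
    (ha : a0 ≠ 0) (he : e0 ≠ 0) : False := by
  rcases ha.lt_or_gt with ha | ha <;> rcases he.lt_or_gt with he | he <;>
    rcases lt_trichotomy i0 0 with hi | hi | hi
  · have h4 := H a0 e0 i0 rfl rfl rfl
    have f1 : a0 + e0 < 0 := by linarith
    have f2 : a0 + i0 < 0 := by linarith
    have f3 : e0 + i0 < 0 := by linarith
    have := mul_neg_of_pos_of_neg (mul_pos_of_neg_of_neg f1 f2) f3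
    linarith
  · subst hi
    have h4 := H a0 e0 0 rfl rfl rfl
    have f1 : a0 + e0 < 0 := by linarith
    have f2 : a0 + (0:ℝ) < 0 := by linarith
    have f3 : e0 + (0:ℝ) < 0 := by linarith
    have := mul_neg_of_pos_of_neg (mul_pos_of_neg_of_neg f1 f2) f3
    linarith
  · have := H (-1) (-1) 3 (sgnN (by norm_num) ha) (sgnN (by norm_num) he)
      (sgnP (by norm_num) hi)
    norm_num at this
  · have := H (-(1/2)) 1 (-(1/4)) (sgnN (by norm_num) ha) (sgnP (by norm_num) he)
      (sgnN (by norm_num) hi)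
    norm_num at this
  · subst hi
    have := H (-(1/2)) 1 0 (sgnN (by norm_num) ha) (sgnP (by norm_num) he) rfl
    norm_num at this
  · have := H (-1) (1/2) 2 (sgnN (by norm_num) ha) (sgnP (by norm_num) he)
      (sgnP (by norm_num) hi)
    norm_num at this
  · have := H 1 (-(1/2)) (-(1/4)) (sgnP (by norm_num) ha) (sgnN (by norm_num) he)
      (sgnN (by norm_num) hi)
    norm_num at this
  · subst hi
    have := H 1 (-(1/2)) 0 (sgnP (by norm_num) ha) (sgnN (by norm_num) he) rfl
    norm_num at this
  · have := H (1/2) (-1) 2 (sgnP (by norm_num) ha) (sgnN (by norm_num) he)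
      (sgnP (by norm_num) hi)
    norm_num at this
  · have := H 2 (1/2) (-1) (sgnP (by norm_num) ha) (sgnP (by norm_num) he)
      (sgnN (by norm_num) hi)
    norm_num at this
  · subst hi
    have f1 : 0 < a0 + e0 := by linarith
    have f2 : 0 < a0 + (0:ℝ) := by linarith
    have f3 : 0 < e0 + (0:ℝ) := by linarith
    have := mul_pos (mul_pos f1 f2) f3
    linarith
  · have f1 : 0 < a0 + e0 := by linarith
    have f2 : 0 < a0 + i0 := by linarith
    have f3 : 0 < e0 + i0 := by linarith
    have := mul_pos (mul_pos f1 f2) f3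
    linarith

lemma diag_zero (a0 e0 i0 : ℝ)
    (H : ∀ a e i : ℝ, Real.sign a = Real.sign a0 → Real.sign e = Real.sign e0 →
      Real.sign i = Real.sign i0 → 0 ≤ (a + e) * (a + i) * (e + i))
    (hz : (a0 + e0) * (a0 + i0) * (e0 + i0) = 0) :
    ∀ a e i : ℝ, Real.sign a = Real.sign a0 → Real.sign e = Real.sign e0 →
      Real.sign i = Real.sign i0 → (a + e) * (a + i) * (e + i) = 0 := by
  have hae : a0 = 0 ∨ e0 = 0 := by
    by_contra hcon; push_neg at hcon
    exact core3 a0 e0 i0 H hz hcon.1 hcon.2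
  have hai : a0 = 0 ∨ i0 = 0 := by
    by_contra hcon; push_neg at hcon
    refine core3 a0 i0 e0 (fun a i e h1 h2 h3 => ?_) (by linear_combination hz) hcon.1 hcon.2
    have h4 := H a e i h1 h3 h2
    nlinarith [h4]
  have hei : e0 = 0 ∨ i0 = 0 := by
    by_contra hcon; push_neg at hcon
    refine core3 e0 i0 a0 (fun e i a h1 h2 h3 => ?_) (by linear_combination hz) hcon.1 hcon.2
    have h4 := H a e i h3 h1 h2
    nlinarith [h4]
  intro a e i h1 h2 h3
  have hz' : ∀ x0 : ℝ, ∀ x : ℝ, x0 = 0 → Real.sign x = Real.sign x0 → x = 0 := by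
    intro x0 x hx0 hx
    exact Real.sign_eq_zero_iff.mp (by rw [hx, hx0, Real.sign_zero])
  rcases hae with h | h
  · rcases hei with h' | h'
    · rw [hz' a0 a h h1, hz' e0 e h' h2]; ring
    · rw [hz' a0 a h h1, hz' i0 i h' h3]; ring
  · rcases hai with h' | h'
    · rw [hz' a0 a h' h1, hz' e0 e h h2]; ring
    · rw [hz' e0 e h h2, hz' i0 i h' h3]; ring



set_option maxHeartbeats 2000000 in
lemma main1 (A : Matrix (Fin 3) (Fin 3) ℝ) (hyp : ∀ M ∈ qualClass A, 0 ≤ D2 M) :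
    (∀ M ∈ qualClass A, 0 < D2 M) ∨ (∀ M ∈ qualClass A, D2 M = 0) := by
  by_cases hex : ∃ M0 ∈ qualClass A, D2 M0 = 0
  · right
    obtain ⟨M0, hM0, h0⟩ := hex
    have e1 := ineq_pu hyp hM0
    have e2 := ineq_qv hyp hM0
    have e3 := ineq_rw hyp hM0
    have e4 := ineq_s hyp hM0
    have e5 := ineq_t hyp hM0
    have e6 := ineq_pqr hyp hM0
    rw [D2_eq] at h0
    have z1 : (M0 0 0 + M0 1 1) * (M0 0 1 * M0 1 0) = 0 := by linarith
    have z2 : (M0 0 0 + M0 2 2) * (M0 0 2 * M0 2 0) = 0 := by linarith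
    have z3 : (M0 1 1 + M0 2 2) * (M0 1 2 * M0 2 1) = 0 := by linarith
    have z4 : M0 0 1 * M0 1 2 * M0 2 0 = 0 := by linarith
    have z5 : M0 0 2 * M0 1 0 * M0 2 1 = 0 := by linarith
    have z6 : (M0 0 0 + M0 1 1) * (M0 0 0 + M0 2 2) * (M0 1 1 + M0 2 2) = 0 := by linarith
    intro M hM
    have hsign : ∀ i j, Real.sign (M i j) = Real.sign (M0 i j) :=
      fun i j => (hM i j).trans (hM0 i j).symm
    have hzero : ∀ i j, M0 i j = 0 → M i j = 0 := fun i j h =>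
      Real.sign_eq_zero_iff.mp (by rw [hsign i j, h, Real.sign_zero])
    -- trick: half/double a diagonal entry of M0
    have scmem : ∀ k : Fin 3, ∀ κ : ℝ, 0 < κ →
        (Matrix.of fun i j => (if i = k ∧ j = k then κ else 1) * M0 i j) ∈ qualClass A := by
      intro k κ hκ
      refine mem_scale hM0 _ (fun i j => ?_)
      by_cases h : i = k ∧ j = k <;> simp [h]
      · exact hκ
    have c4 : M 0 1 * M 1 2 * M 2 0 = 0 := by
      rcases mul_eq_zero.mp z4 with h | h
      · rcases mul_eq_zero.mp h with h' | h'
        · rw [hzero 0 1 h']; ring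
        · rw [hzero 1 2 h']; ring
      · rw [hzero 2 0 h]; ring
    have c5 : M 0 2 * M 1 0 * M 2 1 = 0 := by
      rcases mul_eq_zero.mp z5 with h | h
      · rcases mul_eq_zero.mp h with h' | h'
        · rw [hzero 0 2 h']; ring
        · rw [hzero 1 0 h']; ring
      · rw [hzero 2 1 h]; ring
    have c1 : (M 0 0 + M 1 1) * (M 0 1 * M 1 0) = 0 := by
      rcases mul_eq_zero.mp z1 with hp | hu
      · -- diagonal pair sums to zero
        rcases eq_or_ne (M0 0 1 * M0 1 0) 0 with hu | hu
        · rcases mul_eq_zero.mp hu with h' | h'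
          · rw [hzero 0 1 h']; ring
          · rw [hzero 1 0 h']; ring
        · have hN2 := ineq_pu hyp (scmem 0 2 (by norm_num))
          have hNh := ineq_pu hyp (scmem 0 (1/2) (by norm_num))
          simp only [Matrix.of_apply] at hN2 hNh
          norm_num [Fin.ext_iff] at hN2 hNh
          have hprod : M0 0 0 * (M0 0 1 * M0 1 0) = 0 := by nlinarith
          have ha0 : M0 0 0 = 0 := by
            rcases mul_eq_zero.mp hprod with h | h
            · exact h
            · exact absurd h hu
          have he0 : M0 1 1 = 0 := by linarith
          rw [hzero 0 0 ha0, hzero 1 1 he0]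
          ring
      · rcases mul_eq_zero.mp hu with h' | h'
        · rw [hzero 0 1 h']; ring
        · rw [hzero 1 0 h']; ring
    have c2 : (M 0 0 + M 2 2) * (M 0 2 * M 2 0) = 0 := by
      rcases mul_eq_zero.mp z2 with hp | hu
      · rcases eq_or_ne (M0 0 2 * M0 2 0) 0 with hu | hu
        · rcases mul_eq_zero.mp hu with h' | h'
          · rw [hzero 0 2 h']; ring
          · rw [hzero 2 0 h']; ring
        · have hN2 := ineq_qv hyp (scmem 0 2 (by norm_num))
          have hNh := ineq_qv hyp (scmem 0 (1/2) (by norm_num))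
          simp only [Matrix.of_apply] at hN2 hNh
          norm_num [Fin.ext_iff] at hN2 hNh
          have hprod : M0 0 0 * (M0 0 2 * M0 2 0) = 0 := by nlinarith
          have ha0 : M0 0 0 = 0 := by
            rcases mul_eq_zero.mp hprod with h | h
            · exact h
            · exact absurd h hu
          have he0 : M0 2 2 = 0 := by linarith
          rw [hzero 0 0 ha0, hzero 2 2 he0]
          ring
      · rcases mul_eq_zero.mp hu with h' | h'
        · rw [hzero 0 2 h']; ring
        · rw [hzero 2 0 h']; ring
    have c3 : (M 1 1 + M 2 2) * (M 1 2 * M 2 1) = 0 := by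
      rcases mul_eq_zero.mp z3 with hp | hu
      · rcases eq_or_ne (M0 1 2 * M0 2 1) 0 with hu | hu
        · rcases mul_eq_zero.mp hu with h' | h'
          · rw [hzero 1 2 h']; ring
          · rw [hzero 2 1 h']; ring
        · have hN2 := ineq_rw hyp (scmem 1 2 (by norm_num))
          have hNh := ineq_rw hyp (scmem 1 (1/2) (by norm_num))
          simp only [Matrix.of_apply] at hN2 hNh
          norm_num [Fin.ext_iff] at hN2 hNh
          have hprod : M0 1 1 * (M0 1 2 * M0 2 1) = 0 := by nlinarith
          have ha0 : M0 1 1 = 0 := by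
            rcases mul_eq_zero.mp hprod with h | h
            · exact h
            · exact absurd h hu
          have he0 : M0 2 2 = 0 := by linarith
          rw [hzero 1 1 ha0, hzero 2 2 he0]
          ring
      · rcases mul_eq_zero.mp hu with h' | h'
        · rw [hzero 1 2 h']; ring
        · rw [hzero 2 1 h']; ring
    have c6 : (M 0 0 + M 1 1) * (M 0 0 + M 2 2) * (M 1 1 + M 2 2) = 0 := by
      refine diag_zero (M0 0 0) (M0 1 1) (M0 2 2) (fun a e i h1 h2 h3 => ?_) z6
        (M 0 0) (M 1 1) (M 2 2) (hsign 0 0) (hsign 1 1) (hsign 2 2)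
      have hN : (Matrix.of ![![a, M0 0 1, M0 0 2], ![M0 1 0, e, M0 1 2], ![M0 2 0, M0 2 1, i]])
          ∈ qualClass A := by
        intro i' j'
        fin_cases i' <;> fin_cases j' <;>
          simp only [Matrix.of_apply, Matrix.cons_val_zero, Matrix.cons_val_one,
            Matrix.head_cons, Matrix.cons_val_two, Matrix.tail_cons, Fin.isValue]
        · exact h1.trans (hM0 0 0)
        · exact hM0 0 1
        · exact hM0 0 2
        · exact hM0 1 0
        · exact h2.trans (hM0 1 1)
        · exact hM0 1 2
        · exact hM0 2 0
        · exact hM0 2 1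
        · exact h3.trans (hM0 2 2)
      have := ineq_pqr hyp hN
      simp only [Matrix.of_apply, Matrix.cons_val_zero, Matrix.cons_val_one,
        Matrix.head_cons, Matrix.cons_val_two, Matrix.tail_cons] at this
      exact this
    rw [D2_eq]
    linarith
  · left
    intro M hM
    rcases (hyp M hM).lt_or_eq with h | h
    · exact h
    · exact absurd ⟨M, hM, h.symm⟩ hex

lemma D2_neg (M : Matrix (Fin 3) (Fin 3) ℝ) : D2 (-M) = -D2 M := by
  rw [D2_eq, D2_eq]
  simp only [Matrix.neg_apply]
  ring

lemma neg_mem {A M : Matrix (Fin 3) (Fin 3) ℝ} (hM : M ∈ qualClass A) :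
    (-M) ∈ qualClass (-A) := by
  intro i j
  rw [Matrix.neg_apply, Matrix.neg_apply, Real.sign_neg, Real.sign_neg, hM i j]

theorem threePattern_semidefinite_implies_definite_or_zero
    (A : Matrix (Fin 3) (Fin 3) ℝ) :
    ((∀ M ∈ qualClass A, 0 ≤ D2 M) →
      (∀ M ∈ qualClass A, 0 < D2 M) ∨ (∀ M ∈ qualClass A, D2 M = 0)) ∧
    ((∀ M ∈ qualClass A, D2 M ≤ 0) →
      (∀ M ∈ qualClass A, D2 M < 0) ∨ (∀ M ∈ qualClass A, D2 M = 0)) := by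
  constructor
  · exact main1 A
  · intro hyp
    have hyp' : ∀ N ∈ qualClass (-A), 0 ≤ D2 N := by
      intro N hN
      have hmem : (-N) ∈ qualClass A := by
        have := neg_mem hN
        rwa [neg_neg] at this
      have h1 := hyp (-N) hmem
      rw [D2_neg] at h1
      linarith
    rcases main1 (-A) hyp' with h | h
    · left
      intro M hM
      have := h (-M) (neg_mem hM)
      rw [D2_neg] at this
      linarith
    · right
      intro M hM
      have := h (-M) (neg_mem hM)
      rw [D2_neg] at this
      linarith
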